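/- For every s ∈ [0,1/2] there exist a Hermitian matrix R on ℂ³⊗ℂ³ and a Hermitian matrix S on ℂ³ such that R − T_b(J^s), R + T_b(J^s), I₃⊗S − T_b(R), and I₃⊗S + T_b(R) are all positive semidefinite and Tr(S) = 2. (This exhibits a feasible point of the Wang–Xie–Duan semidefinite program, establishing β(N_s) ≤ 2 and hence the strong-converse classical-capacity bound C(N_s) ≤ log₂ β(N_s) ≤ 1; one may take R = s|00⟩⟨00| + (1−s)|01⟩⟨01| + |02⟩⟨02| + |ψ⟩⟨ψ| + |12⟩⟨12| + |22⟩⟨22| with |ψ⟩ = √s|1⟩⊗|0⟩ + √(1−s)|2⟩⊗|1⟩, and S = s|0⟩⟨0| + (1−s)|1⟩⟨1| + |2⟩⟨2|.) -/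

import Mathlib

open Matrix Kronecker ComplexOrder

/-- Partial transpose on the second tensor factor. -/
noncomputable def ptransposeB {m n : ℕ}
    (M : Matrix (Fin m × Fin n) (Fin m × Fin n) ℂ) :
    Matrix (Fin m × Fin n) (Fin m × Fin n) ℂ :=
  Matrix.of fun p q => M (p.1, q.2) (q.1, p.2)

/-- |ψ₁⟩ = √s |0⟩⊗|0⟩ + |1⟩⊗|2⟩. -/
noncomputable def psi1 (s : ℝ) : Fin 3 × Fin 3 → ℂ := fun p =>
  if p = (0, 0) then (Real.sqrt s : ℂ) else if p = (1, 2) then 1 else 0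

/-- |ψ₂⟩ = √(1−s) |0⟩⊗|1⟩ + |2⟩⊗|2⟩. -/
noncomputable def psi2 (s : ℝ) : Fin 3 × Fin 3 → ℂ := fun p =>
  if p = (0, 1) then (Real.sqrt (1 - s) : ℂ) else if p = (2, 2) then 1 else 0

/-- The unnormalized Choi operator J^s = |ψ₁⟩⟨ψ₁| + |ψ₂⟩⟨ψ₂| of the channel N_s. -/
noncomputable def choiNs (s : ℝ) : Matrix (Fin 3 × Fin 3) (Fin 3 × Fin 3) ℂ :=
  Matrix.vecMulVec (psi1 s) (star (psi1 s)) + Matrix.vecMulVec (psi2 s) (star (psi2 s))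

namespace Stmt3Aux

/-- Rank-one outer product |v⟩⟨v|. -/
noncomputable def outer {n : Type*} (v : n → ℂ) : Matrix n n ℂ :=
  Matrix.vecMulVec v (star v)

lemma outer_psd {n : Type*} [Fintype n] [DecidableEq n] (v : n → ℂ) :
    (outer v).PosSemidef := by
  have h : outer v = (replicateCol (Fin 1) v) * (replicateCol (Fin 1) v)ᴴ := by
    rw [outer, vecMulVec_eq (Fin 1)]; rfl
  rw [h]
  exact posSemidef_self_mul_conjTranspose _

lemma outer_herm {n : Type*} [Fintype n] [DecidableEq n] (v : n → ℂ) :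
    (outer v).IsHermitian := (outer_psd v).1

lemma psd_add {n : Type*} [Fintype n] {A B : Matrix n n ℂ}
    (hA : A.PosSemidef) (hB : B.PosSemidef) : (A + B).PosSemidef := by
  refine ⟨hA.1.add hB.1, fun x => ?_⟩
  exact (hA.add hB).2 x

lemma outer_apply {n : Type*} (v : n → ℂ) (p q : n) :
    outer v p q = v p * star (v q) := by
  simp [outer, vecMulVec_apply]

/-- The SDP dual variable R. -/
noncomputable def Rmat (s : ℝ) : Matrix (Fin 3 × Fin 3) (Fin 3 × Fin 3) ℂ :=
  outer (fun p => if p = (0,0) then (Real.sqrt s : ℂ) else 0) +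
  outer (fun p => if p = (0,1) then (Real.sqrt (1-s) : ℂ) else 0) +
  outer (fun p => if p = (0,2) then 1 else 0) +
  outer (fun p => if p = (1,0) then (Real.sqrt s : ℂ)
    else if p = (2,1) then (Real.sqrt (1-s) : ℂ) else 0) +
  outer (fun p => if p = (1,2) then 1 else 0) +
  outer (fun p => if p = (2,2) then 1 else 0)

/-- The SDP dual variable S. -/
noncomputable def Smat (s : ℝ) : Matrix (Fin 3) (Fin 3) ℂ :=
  Matrix.of fun i j => if i = j then
    (if i = 0 then (s : ℂ) else if i = 1 then ((1 - s : ℝ) : ℂ) else 1) else 0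

end Stmt3Aux

set_option maxHeartbeats 4000000 in
open Stmt3Aux in
/-- Feasible point for the Wang–Xie–Duan SDP: β(N_s) ≤ 2, hence C(N_s) ≤ 1. -/
theorem stmt3 (s : ℝ) (hs : s ∈ Set.Icc (0 : ℝ) (1/2)) :
    ∃ (R : Matrix (Fin 3 × Fin 3) (Fin 3 × Fin 3) ℂ) (S : Matrix (Fin 3) (Fin 3) ℂ),
      R.IsHermitian ∧ S.IsHermitian ∧
      (R - ptransposeB (choiNs s)).PosSemidef ∧
      (R + ptransposeB (choiNs s)).PosSemidef ∧
      ((1 : Matrix (Fin 3) (Fin 3) ℂ) ⊗ₖ S - ptransposeB R).PosSemidef ∧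
      ((1 : Matrix (Fin 3) (Fin 3) ℂ) ⊗ₖ S + ptransposeB R).PosSemidef ∧
      S.trace = 2 := by
  obtain ⟨hs0, hs1⟩ := hs
  have hs1' : s ≤ 1 := hs1.trans (by norm_num)
  have ha2 : (Real.sqrt s : ℂ) * (Real.sqrt s : ℂ) = (s : ℂ) := by
    norm_cast; exact Real.mul_self_sqrt hs0
  have hb2 : (Real.sqrt (1-s) : ℂ) * (Real.sqrt (1-s) : ℂ) = ((1-s : ℝ) : ℂ) := by
    norm_cast; exact Real.mul_self_sqrt (by linarith)
  have hc2 : (Real.sqrt 2 : ℂ) * (Real.sqrt 2 : ℂ) = 2 := by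
    norm_cast; exact Real.mul_self_sqrt (by norm_num)
  have ha2' : ∀ x : ℂ, (Real.sqrt s : ℂ) * ((Real.sqrt s : ℂ) * x) = (s : ℂ) * x := by
    intro x; rw [← mul_assoc, ha2]
  have hb2' : ∀ x : ℂ, (Real.sqrt (1-s) : ℂ) * ((Real.sqrt (1-s) : ℂ) * x)
      = ((1-s : ℝ) : ℂ) * x := by
    intro x; rw [← mul_assoc, hb2]
  have hc2' : ∀ x : ℂ, (Real.sqrt 2 : ℂ) * ((Real.sqrt 2 : ℂ) * x) = 2 * x := by
    intro x; rw [← mul_assoc, hc2]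
  have hab : (Real.sqrt (1-s) : ℂ) * (Real.sqrt s : ℂ)
      = (Real.sqrt s : ℂ) * (Real.sqrt (1-s) : ℂ) := mul_comm _ _
  have hA2 : (Real.sqrt s : ℂ) ^ 2 = (s : ℂ) := by rw [sq, ha2]
  have hB2 : (Real.sqrt (1-s) : ℂ) ^ 2 = ((1-s : ℝ) : ℂ) := by rw [sq, hb2]
  have hC2 : (Real.sqrt 2 : ℂ) ^ 2 = 2 := by rw [sq, hc2]
  refine ⟨Rmat s, Smat s, ?_, ?_, ?_, ?_, ?_, ?_, ?_⟩
  · exact ((((((outer_herm _).add (outer_herm _)).add (outer_herm _)).add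
      (outer_herm _)).add (outer_herm _)).add (outer_herm _))
  · ext i j
    fin_cases i <;> fin_cases j <;>
      simp [Smat, Matrix.conjTranspose_apply, Complex.conj_ofReal]
  · have key : Rmat s - ptransposeB (choiNs s) =
        outer (fun p => if p = (0,2) then 1 else if p = (1,0) then -(Real.sqrt s : ℂ)
          else if p = (2,1) then -(Real.sqrt (1-s) : ℂ) else 0) := by
      ext ⟨i, j⟩ ⟨k, l⟩
      fin_cases i <;> fin_cases j <;> fin_cases k <;> fin_cases l <;>
        simp [Rmat, outer_apply, ptransposeB, choiNs, psi1, psi2, vecMulVec_apply,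
          Complex.conj_ofReal, ha2, hb2, Prod.mk.injEq,
          -Prod.mk_zero_zero, -Prod.mk_one_one]
    rw [key]; exact outer_psd _
  · have key : Rmat s + ptransposeB (choiNs s) =
        outer (fun p => if p = (0,0) then (Real.sqrt 2 : ℂ) * (Real.sqrt s : ℂ) else 0) +
        outer (fun p => if p = (0,1) then (Real.sqrt 2 : ℂ) * (Real.sqrt (1-s) : ℂ) else 0) +
        outer (fun p => if p = (0,2) then 1 else if p = (1,0) then (Real.sqrt s : ℂ)
          else if p = (2,1) then (Real.sqrt (1-s) : ℂ) else 0) +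
        outer (fun p => if p = (1,2) then (Real.sqrt 2 : ℂ) else 0) +
        outer (fun p => if p = (2,2) then (Real.sqrt 2 : ℂ) else 0) := by
      ext ⟨i, j⟩ ⟨k, l⟩
      fin_cases i <;> fin_cases j <;> fin_cases k <;> fin_cases l <;>
        simp [Rmat, outer_apply, ptransposeB, choiNs, psi1, psi2, vecMulVec_apply,
          Complex.conj_ofReal, ha2, hb2, hc2, ha2', hb2', hc2', hab,
          Prod.mk.injEq,
          -Prod.mk_zero_zero, -Prod.mk_one_one] <;>
        (try ring_nf) <;> (try simp [hA2, hB2, hC2, hab]) <;> (try exact mul_comm _ _) <;> (try ring_nf)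
    rw [key]
    exact psd_add (psd_add (psd_add (psd_add (outer_psd _) (outer_psd _)) (outer_psd _))
      (outer_psd _)) (outer_psd _)
  · have key : (1 : Matrix (Fin 3) (Fin 3) ℂ) ⊗ₖ Smat s - ptransposeB (Rmat s) =
        outer (fun p => if p = (1,1) then (Real.sqrt (1-s) : ℂ)
          else if p = (2,0) then -(Real.sqrt s : ℂ) else 0) := by
      ext ⟨i, j⟩ ⟨k, l⟩
      fin_cases i <;> fin_cases j <;> fin_cases k <;> fin_cases l <;>
        simp [Rmat, Smat, outer_apply, ptransposeB, vecMulVec_apply, Matrix.one_apply,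
          Complex.conj_ofReal, ha2, hb2, hab, Prod.mk.injEq,
          -Prod.mk_zero_zero, -Prod.mk_one_one] <;> (try exact mul_comm _ _)
    rw [key]; exact outer_psd _
  · have key : (1 : Matrix (Fin 3) (Fin 3) ℂ) ⊗ₖ Smat s + ptransposeB (Rmat s) =
        outer (fun p => if p = (0,0) then (Real.sqrt 2 : ℂ) * (Real.sqrt s : ℂ) else 0) +
        outer (fun p => if p = (0,1) then (Real.sqrt 2 : ℂ) * (Real.sqrt (1-s) : ℂ) else 0) +
        outer (fun p => if p = (0,2) then (Real.sqrt 2 : ℂ) else 0) +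
        outer (fun p => if p = (1,0) then (Real.sqrt 2 : ℂ) * (Real.sqrt s : ℂ) else 0) +
        outer (fun p => if p = (1,2) then (Real.sqrt 2 : ℂ) else 0) +
        outer (fun p => if p = (2,1) then (Real.sqrt 2 : ℂ) * (Real.sqrt (1-s) : ℂ) else 0) +
        outer (fun p => if p = (2,2) then (Real.sqrt 2 : ℂ) else 0) +
        outer (fun p => if p = (1,1) then (Real.sqrt (1-s) : ℂ)
          else if p = (2,0) then (Real.sqrt s : ℂ) else 0) := by
      ext ⟨i, j⟩ ⟨k, l⟩
      fin_cases i <;> fin_cases j <;> fin_cases k <;> fin_cases l <;>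
        simp [Rmat, Smat, outer_apply, ptransposeB, vecMulVec_apply, Matrix.one_apply,
          Complex.conj_ofReal, ha2, hb2, hc2, ha2', hb2', hc2', hab,
          Prod.mk.injEq,
          -Prod.mk_zero_zero, -Prod.mk_one_one] <;>
        (try ring_nf) <;> (try simp [hA2, hB2, hC2, hab]) <;> (try exact mul_comm _ _) <;> (try ring_nf)
    rw [key]
    exact psd_add (psd_add (psd_add (psd_add (psd_add (psd_add (psd_add
      (outer_psd _) (outer_psd _)) (outer_psd _)) (outer_psd _)) (outer_psd _))
      (outer_psd _)) (outer_psd _)) (outer_psd _)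
  · simp [Smat, Matrix.trace, Matrix.diag, Fin.sum_univ_three]
    push_cast; ring
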